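/- Fix v ≥ 1, a clause index j with offset o_j = 5(j−1), three distinct associated colors k¹,k²,k³ ∈ {1,…,2v}, a dummy progress value e, and the clause gadget C_j over 2v+1 colors. Let k ≤ 2v be any color and consider processing C_j with hand size 2 from a configuration with empty hand in which the dummy color 2v+1 has been played exactly up to value e−1 and color k has been played exactly up to value o_j+5. Then among play sequences over C_j from this configuration that play all three dummy-color cards of C_j, there is one that additionally plays the cards of values o_j+6, o_j+7, o_j+8, o_j+9, o_j+10 of color k, and no such play sequence plays any card of color k of value greater than o_j+10. -/

import Mathlib

/-- A card is a pair (value, color). -/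
abbrev Card : Type := ℕ × ℕ

/-- The card at (0-indexed) position `i` of deck `σ` (junk `(0,0)` when out of range). -/
def nth (σ : List Card) (i : ℕ) : Card := σ.getD i (0, 0)

/-- A configuration: for each color, the highest value played so far in that color
(values `1,…,played k` of color `k` count as played), the hand (the set of positions
of the cards currently stored), and the set of positions of the cards played so far. -/
structure Config where
  played : ℕ → ℕ
  hand : Finset ℕ
  done : Finset ℕ

/-- `PlayFromHand σ cfg cfg'`: starting from `cfg`, play zero or more cards stored
in the hand (each playable card increments the progress of its color). -/
inductive PlayFromHand (σ : List Card) : Config → Config → Prop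
  | refl (cfg : Config) : PlayFromHand σ cfg cfg
  | play (cfg cfg' : Config) (j : ℕ) (hj : j ∈ cfg.hand)
      (hplay : cfg.played (nth σ j).2 + 1 = (nth σ j).1)
      (htail : PlayFromHand σ
        ⟨Function.update cfg.played (nth σ j).2 (nth σ j).1,
          cfg.hand.erase j, insert j cfg.done⟩ cfg') :
      PlayFromHand σ cfg cfg'

/-- `Step σ h i cfg cfg'`: processing the drawn card at position `i` with hand size `h`,
the player either discards it, stores it (the hand may never exceed `h` cards), or plays
it immediately (followed by playing any number of stored cards). -/
inductive Step (σ : List Card) (h : ℕ) (i : ℕ) : Config → Config → Prop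
  | discard (cfg : Config) : Step σ h i cfg cfg
  | store (cfg : Config) (hsize : (insert i cfg.hand).card ≤ h) :
      Step σ h i cfg ⟨cfg.played, insert i cfg.hand, cfg.done⟩
  | playNow (cfg cfg' : Config)
      (hplay : cfg.played (nth σ i).2 + 1 = (nth σ i).1)
      (htail : PlayFromHand σ
        ⟨Function.update cfg.played (nth σ i).2 (nth σ i).1,
          cfg.hand, insert i cfg.done⟩ cfg') :
      Step σ h i cfg cfg'

/-- The initial configuration: nothing played, empty hand. -/
def Config.initial : Config := ⟨fun _ => 0, ∅, ∅⟩

/-- A play sequence with hand size `h` on deck `σ`, starting from configuration `start`: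
a sequence of configurations where the `i`-th step processes the card at position `i`. -/
structure PlaySeq (σ : List Card) (h : ℕ) (start : Config) where
  cfgs : ℕ → Config
  init : cfgs 0 = start
  step : ∀ i < σ.length, Step σ h i (cfgs i) (cfgs (i + 1))

/-- The final configuration of a play sequence. -/
def PlaySeq.final {σ : List Card} {h : ℕ} {start : Config} (ps : PlaySeq σ h start) :
    Config := ps.cfgs σ.length

/-- A winning play sequence: for every color `k ∈ {1,…,c}`, all values `1,…,n` are played. -/
def PlaySeq.Winning {σ : List Card} {h : ℕ} {start : Config} (ps : PlaySeq σ h start)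
    (n c : ℕ) : Prop :=
  ∀ k, 1 ≤ k → k ≤ c → n ≤ ps.final.played k

/-- `σ` is a deck over `n` values and `c` colors. -/
def ValidDeck (σ : List Card) (n c : ℕ) : Prop :=
  ∀ cd ∈ σ, 1 ≤ cd.1 ∧ cd.1 ≤ n ∧ 1 ≤ cd.2 ∧ cd.2 ≤ c

/-- Values `o+6,…,o+10` of (associated) color `k`. -/
def assocRun (o k : ℕ) : List Card :=
  [(o+6, k), (o+7, k), (o+8, k), (o+9, k), (o+10, k)]

/-- Values `o+5,…,o+10, o+2, o+3, o+4` of (non-associated) color `k`, in this order. -/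
def nonAssocRun (o k : ℕ) : List Card :=
  [(o+5, k), (o+6, k), (o+7, k), (o+8, k), (o+9, k), (o+10, k), (o+2, k), (o+3, k), (o+4, k)]

/-- Values `o+2, o+4, o+5, o+6` of color `k`, in this order. -/
def tailRun (o k : ℕ) : List Card :=
  [(o+2, k), (o+4, k), (o+5, k), (o+6, k)]

/-- The clause gadget `C_j` over `2v+1` colors, with offset `o = o_j`, dummy progress
value `e`, dummy color `2v+1` and associated colors `k₁, k₂, k₃`: (i) values
`o+6,…,o+10` of each associated color; (ii) for each non-associated color
`k ∈ {1,…,2v}`, values `o+5,…,o+10, o+2, o+3, o+4` of color `k`; (iii) the dummy cards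
`(e+1, 2v+1), (e+2, 2v+1), (e, 2v+1)`; (iv) the cards `(o+3,k₁), (o+3,k₂), (o+3,k₃)`
followed by values `o+2, o+4, o+5, o+6` of `k₁`, then of `k₂`, then of `k₃`. -/
def clauseGadget (v o e k1 k2 k3 : ℕ) : List Card :=
  assocRun o k1 ++ assocRun o k2 ++ assocRun o k3 ++
  ((List.range (2*v)).flatMap fun idx =>
    if idx + 1 = k1 ∨ idx + 1 = k2 ∨ idx + 1 = k3 then [] else nonAssocRun o (idx + 1)) ++
  [(e+1, 2*v+1), (e+2, 2*v+1), (e, 2*v+1)] ++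
  [(o+3, k1), (o+3, k2), (o+3, k3)] ++ tailRun o k1 ++ tailRun o k2 ++ tailRun o k3

/-! ### Auxiliary machinery -/

/-- `Steps σ h a b c c'`: a chain of steps processing positions `a,…,b-1`, from
configuration `c` to configuration `c'`. -/
def Steps (σ : List Card) (h a b : ℕ) (c c' : Config) : Prop :=
  ∃ f : ℕ → Config, f a = c ∧ f b = c' ∧ ∀ i, a ≤ i → i < b → Step σ h i (f i) (f (i+1))

lemma Steps.trans {σ : List Card} {h a b c : ℕ} {x y z : Config}
    (hab : a ≤ b) (hbc : b ≤ c) (h1 : Steps σ h a b x y) (h2 : Steps σ h b c y z) :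
    Steps σ h a c x z := by
  obtain ⟨f, hfa, hfb, hf⟩ := h1
  obtain ⟨g, hga, hgb, hg⟩ := h2
  refine ⟨fun i => if i < b then f i else g i, ?_, ?_, ?_⟩
  · by_cases hab' : a < b
    · simp [hab', hfa]
    · have hab'' : a = b := by omega
      subst hab''
      simp only [if_neg hab']
      rw [hga, ← hfb, hfa]
  · simp only [if_neg (by omega : ¬ c < b)]
    exact hgb
  · intro i hai hic
    by_cases hib : i < b
    · by_cases hib1 : i + 1 < b
      · simpa [hib, hib1] using hf i hai hib
      · have hib1' : i + 1 = b := by omega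
        have := hf i hai hib
        simp only [if_pos hib, if_neg (by omega : ¬ i + 1 < b)]
        rw [hib1', hga, ← hfb, ← hib1']
        exact this
    · have hbi : b ≤ i := le_of_not_gt hib
      simp only [if_neg hib, if_neg (by omega : ¬ i + 1 < b)]
      exact hg i hbi hic

lemma steps_refl (σ : List Card) (h a b : ℕ) (c : Config) : Steps σ h a b c c :=
  ⟨fun _ => c, rfl, rfl, fun i _ _ => Step.discard c⟩

lemma steps_single {σ : List Card} {h : ℕ} (a : ℕ) {c c' : Config}
    (hs : Step σ h a c c') : Steps σ h a (a+1) c c' := by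
  refine ⟨fun i => if i = a then c else c', by simp, by simp, ?_⟩
  intro i hai hib
  have : i = a := by omega
  subst this
  simpa using hs

lemma nth_append (pre rest : List Card) (m : ℕ) :
    nth (pre ++ rest) (pre.length + m) = nth rest m := by
  simp [nth, List.getD, List.getElem?_append_right (by omega : pre.length ≤ pre.length + m)]

lemma steps_play (σ : List Card) (h a v col : ℕ) (p : ℕ → ℕ) (H d : Finset ℕ)
    (hc : nth σ a = (v, col)) (hp : p col + 1 = v) :
    Steps σ h a (a+1) ⟨p, H, d⟩ ⟨Function.update p col v, H, insert a d⟩ := by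
  apply steps_single
  refine Step.playNow _ _ (by rw [hc]; exact hp) ?_
  rw [hc]
  exact PlayFromHand.refl _

lemma steps_playRun (σ : List Card) (h col r : ℕ) :
    ∀ a s (p : ℕ → ℕ) (H d0 : Finset ℕ),
    (∀ m, m < r → nth σ (a+m) = (s+1+m, col)) → p col = s →
    ∃ d, Steps σ h a (a+r) ⟨p, H, d0⟩ ⟨Function.update p col (s+r), H, d⟩ := by
  induction r with
  | zero =>
    intro a s p H d0 _ hp
    refine ⟨d0, ?_⟩
    have : Function.update p col (s+0) = p := by
      rw [← hp]; simp [Function.update_eq_self]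
    rw [this]
    exact steps_refl σ h a a _
  | succ r ih =>
    intro a s p H d0 hcards hp
    have h0 : nth σ a = (s+1, col) := by simpa using hcards 0 (by omega)
    obtain ⟨d, hd⟩ := ih (a+1) (s+1) (Function.update p col (s+1)) H (insert a d0)
      (fun m hm => by
        have := hcards (m+1) (by omega)
        rw [show a+1+m = a+(m+1) by omega, show s+1+1+m = s+1+(m+1) by omega]
        exact this)
      (by simp)
    refine ⟨d, ?_⟩
    have hstep := steps_play σ h a (s+1) col p H d0 h0 (by omega)
    have := hstep.trans (by omega) (by omega) hd
    rwa [Function.update_idem, (by omega : s + 1 + r = s + (r+1)),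
      (by omega : a + 1 + r = a + (r+1))] at this

lemma steps_store (σ : List Card) (h a : ℕ) (p : ℕ → ℕ) (H d : Finset ℕ)
    (hsize : (insert a H).card ≤ h) :
    Steps σ h a (a+1) ⟨p, H, d⟩ ⟨p, insert a H, d⟩ :=
  steps_single a (Step.store _ hsize)

lemma steps_dummy (σ : List Card) (h a e D : ℕ) (p : ℕ → ℕ) (d0 : Finset ℕ)
    (h0 : nth σ a = (e+1, D)) (h1 : nth σ (a+1) = (e+2, D)) (h2 : nth σ (a+2) = (e, D))
    (hp : p D = e - 1) (he : 1 ≤ e) (hh : 2 ≤ h) :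
    ∃ d, Steps σ h a (a+3) ⟨p, ∅, d0⟩ ⟨Function.update p D (e+2), ∅, d⟩ := by
  have s1 : Steps σ h a (a+1) ⟨p, ∅, d0⟩ ⟨p, {a}, d0⟩ := by
    simpa using steps_store σ h a p ∅ d0 (by simpa using (by omega : 1 ≤ h))
  have s2 : Steps σ h (a+1) (a+2) ⟨p, {a}, d0⟩ ⟨p, insert (a+1) {a}, d0⟩ := by
    apply steps_store
    have : (insert (a+1) ({a} : Finset ℕ)).card ≤ 2 := by
      apply le_trans (Finset.card_insert_le _ _)
      simp
    omega
  have s3 : Steps σ h (a+2) (a+3) ⟨p, insert (a+1) {a}, d0⟩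
      ⟨Function.update p D (e+2), ∅, insert (a+1) (insert a (insert (a+2) d0))⟩ := by
    apply steps_single
    refine Step.playNow _ _ (by rw [h2]; show p D + 1 = e; omega) ?_
    rw [h2]
    simp only
    refine PlayFromHand.play _ _ a (by simp) ?_ ?_
    · rw [h0]
      simp only
      rw [Function.update_self]
    · rw [h0]
      simp only
      refine PlayFromHand.play _ _ (a+1) (by simp) ?_ ?_
      · rw [h1]
        simp only
        rw [Function.update_self]
      · rw [h1]
        simp only
        have e1 : Function.update (Function.update (Function.update p D e) D (e + 1)) D (e + 2)
            = Function.update p D (e+2) := by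
          rw [Function.update_idem, Function.update_idem]
        have e2 : ((insert (a+1) ({a} : Finset ℕ)).erase a).erase (a+1) = ∅ := by
          ext x; simp; omega
        rw [e1, e2]
        exact PlayFromHand.refl _
  exact ⟨_, s1.trans (by omega) (by omega) (s2.trans (by omega) (by omega) s3)⟩

lemma playSeq_of_steps {σ : List Card} {h : ℕ} {start fin : Config}
    (hs : Steps σ h 0 σ.length start fin) :
    ∃ ps : PlaySeq σ h start, ps.final = fin := by
  obtain ⟨f, h0, hL, hstep⟩ := hs
  exact ⟨⟨f, h0, fun i hi => hstep i (Nat.zero_le _) hi⟩, hL⟩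

lemma exists_play (σ pre mid post : List Card) (h o e k D : ℕ)
    (hσ : σ = pre ++ assocRun o k ++ mid ++ [(e+1, D), (e+2, D), (e, D)] ++ post)
    (p0 : ℕ → ℕ) (hpk : p0 k = o + 5) (hpD : p0 D = e - 1) (hkD : k ≠ D)
    (he : 1 ≤ e) (hh : 2 ≤ h) :
    ∃ ps : PlaySeq σ h ⟨p0, ∅, ∅⟩,
      ps.final.played D = e + 2 ∧ ps.final.played k = o + 10 := by
  set a1 := pre.length with ha1
  -- cards of the run
  have hrun : ∀ m, m < 5 → nth σ (a1 + m) = (o + 5 + 1 + m, k) := by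
    intro m hm
    have : σ = pre ++ (assocRun o k ++ (mid ++ [(e+1, D), (e+2, D), (e, D)] ++ post)) := by
      rw [hσ]; simp [List.append_assoc]
    rw [this, nth_append]
    interval_cases m <;> simp [nth, assocRun]
  have hs1 : Steps σ h 0 a1 ⟨p0, ∅, ∅⟩ ⟨p0, ∅, ∅⟩ := steps_refl _ _ _ _ _
  obtain ⟨d1, hs2⟩ := steps_playRun σ h k 5 a1 (o+5) p0 ∅ ∅ hrun hpk
  set p1 := Function.update p0 k (o + 5 + 5) with hp1
  set a2 := a1 + 5 + mid.length with ha2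
  have hs3 : Steps σ h (a1+5) a2 ⟨p1, ∅, d1⟩ ⟨p1, ∅, d1⟩ := steps_refl _ _ _ _ _
  -- dummy cards
  have hpre2 : σ = (pre ++ assocRun o k ++ mid) ++ ([(e+1, D), (e+2, D), (e, D)] ++ post) := by
    rw [hσ]; simp [List.append_assoc]
  have hlen2 : (pre ++ assocRun o k ++ mid).length = a2 := by
    simp [ha2, ha1, assocRun]; omega
  have hdum : ∀ m, m < 3 →
      nth σ (a2 + m) = nth ([(e+1, D), (e+2, D), (e, D)] ++ post) m := by
    intro m hm
    rw [hpre2, ← hlen2, nth_append]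
  obtain ⟨d2, hs4⟩ := steps_dummy σ h a2 e D p1 d1
    (by have := hdum 0 (by omega); simp only [Nat.add_zero] at this; rw [this]; simp [nth])
    (by rw [show a2 + 1 = a2 + 1 from rfl, hdum 1 (by omega)]; simp [nth])
    (by rw [hdum 2 (by omega)]; simp [nth])
    (by rw [hp1, Function.update_of_ne (Ne.symm hkD)]; exact hpD) he hh
  set p2 := Function.update p1 D (e + 2) with hp2
  have hs5 : Steps σ h (a2+3) σ.length ⟨p2, ∅, d2⟩ ⟨p2, ∅, d2⟩ := steps_refl _ _ _ _ _
  have hlenσ : a2 + 3 ≤ σ.length := by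
    rw [hσ]; simp [ha2, ha1, assocRun]; omega
  have := ((hs1.trans (by omega) (by omega)
    (hs2.trans (by omega) (by omega)
      (hs3.trans (by omega) (by omega)
        (hs4.trans (by omega) hlenσ hs5)))) : Steps σ h 0 σ.length _ _)
  obtain ⟨ps, hps⟩ := playSeq_of_steps this
  refine ⟨ps, ?_, ?_⟩
  · rw [hps]
    simp [hp2, Function.update_self]
  · rw [hps]
    simp only [hp2, hp1]
    rw [Function.update_of_ne hkD, Function.update_self]

lemma gadget_cards (v o e K1 K2 K3 : ℕ) :
    ∀ cd ∈ clauseGadget v o e K1 K2 K3, cd.2 = 2*v+1 ∨ cd.1 ≤ o+10 := by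
  intro cd hcd
  simp only [clauseGadget, List.mem_append, List.mem_flatMap, List.mem_range] at hcd
  rcases hcd with ((((((((h|h)|h)|⟨i,hi,h⟩)|h)|h)|h)|h)|h)
  · right; simp only [assocRun, List.mem_cons, List.not_mem_nil, or_false] at h
    rcases h with rfl|rfl|rfl|rfl|rfl <;> (dsimp only; omega)
  · right; simp only [assocRun, List.mem_cons, List.not_mem_nil, or_false] at h
    rcases h with rfl|rfl|rfl|rfl|rfl <;> (dsimp only; omega)
  · right; simp only [assocRun, List.mem_cons, List.not_mem_nil, or_false] at h
    rcases h with rfl|rfl|rfl|rfl|rfl <;> (dsimp only; omega)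
  · right
    split at h
    · simp at h
    · simp only [nonAssocRun, List.mem_cons, List.not_mem_nil, or_false] at h
      rcases h with rfl|rfl|rfl|rfl|rfl|rfl|rfl|rfl|rfl <;> (dsimp only; omega)
  · left; simp only [List.mem_cons, List.not_mem_nil, or_false] at h
    rcases h with rfl|rfl|rfl <;> rfl
  · right; simp only [List.mem_cons, List.not_mem_nil, or_false] at h
    rcases h with rfl|rfl|rfl <;> (dsimp only; omega)
  · right; simp only [tailRun, List.mem_cons, List.not_mem_nil, or_false] at h
    rcases h with rfl|rfl|rfl|rfl <;> (dsimp only; omega)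
  · right; simp only [tailRun, List.mem_cons, List.not_mem_nil, or_false] at h
    rcases h with rfl|rfl|rfl|rfl <;> (dsimp only; omega)
  · right; simp only [tailRun, List.mem_cons, List.not_mem_nil, or_false] at h
    rcases h with rfl|rfl|rfl|rfl <;> (dsimp only; omega)

lemma nth_bound {σ : List Card} {o k : ℕ} (hk : 1 ≤ k)
    (hcards : ∀ cd ∈ σ, cd.2 = k → cd.1 ≤ o+10) :
    ∀ m, (nth σ m).2 = k → (nth σ m).1 ≤ o+10 := by
  intro m hm
  by_cases h : m < σ.length
  · have : nth σ m ∈ σ := by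
      rw [nth, List.getD_eq_getElem _ _ h]
      exact List.getElem_mem h
    exact hcards _ this hm
  · rw [nth, List.getD_eq_default _ _ (by omega)] at hm ⊢
    simp at hm
    omega

lemma playFromHand_bound {σ : List Card} {o k : ℕ}
    (hb : ∀ m, (nth σ m).2 = k → (nth σ m).1 ≤ o+10)
    {c c' : Config} (hp : PlayFromHand σ c c') (hc : c.played k ≤ o+10) :
    c'.played k ≤ o+10 := by
  induction hp with
  | refl => exact hc
  | play cfg cfg' j hj hplay htail ih =>
    apply ih
    simp only [Function.update_apply]
    split
    · next heq => exact hb j heq.symm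
    · exact hc

lemma step_bound {σ : List Card} {h o k : ℕ}
    (hb : ∀ m, (nth σ m).2 = k → (nth σ m).1 ≤ o+10)
    {i : ℕ} {c c' : Config} (hs : Step σ h i c c') (hc : c.played k ≤ o+10) :
    c'.played k ≤ o+10 := by
  cases hs with
  | discard => exact hc
  | store _ => exact hc
  | playNow _ hplay htail =>
    refine playFromHand_bound hb htail ?_
    simp only [Function.update_apply]
    split
    · next heq => exact hb i heq.symm
    · exact hc

lemma playSeq_bound {σ : List Card} {h o k : ℕ} {start : Config}
    (hb : ∀ m, (nth σ m).2 = k → (nth σ m).1 ≤ o+10)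
    (ps : PlaySeq σ h start) (h0 : start.played k ≤ o+10) :
    ps.final.played k ≤ o+10 := by
  suffices h' : ∀ i, i ≤ σ.length → (ps.cfgs i).played k ≤ o+10 from h' _ le_rfl
  intro i
  induction i with
  | zero => intro _; rw [ps.init]; exact h0
  | succ i ih =>
    intro hi
    exact step_bound hb (ps.step i (by omega)) (ih (by omega))

/-- Let `k ≤ 2v` be any color and process `C_j` (offset `o = 5(j-1)`)
with hand size 2 from a configuration with empty hand where the dummy color has been
played exactly up to `e-1` and color `k` exactly up to `o+5`. Among play sequences from
this configuration playing all three dummy cards, some one also plays values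
`o+6,…,o+10` of color `k`, and none plays a card of color `k` of value `> o+10`. -/
theorem clauseGadget_advanced_color
    (v j e : ℕ) (hv : 1 ≤ v) (hj : 1 ≤ j) (he : 1 ≤ e)
    (k1 k2 k3 : ℕ)
    (hk1 : 1 ≤ k1 ∧ k1 ≤ 2*v) (hk2 : 1 ≤ k2 ∧ k2 ≤ 2*v) (hk3 : 1 ≤ k3 ∧ k3 ≤ 2*v)
    (hne : k1 ≠ k2 ∧ k1 ≠ k3 ∧ k2 ≠ k3)
    (k : ℕ) (hk : 1 ≤ k ∧ k ≤ 2*v)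
    (p0 : ℕ → ℕ) (hp0d : p0 (2*v+1) = e - 1) (hp0k : p0 k = 5*(j-1) + 5) :
    (∃ ps : PlaySeq (clauseGadget v (5*(j-1)) e k1 k2 k3) 2 ⟨p0, ∅, ∅⟩,
        e + 2 ≤ ps.final.played (2*v+1) ∧
        5*(j-1) + 10 ≤ ps.final.played k) ∧
    (∀ ps : PlaySeq (clauseGadget v (5*(j-1)) e k1 k2 k3) 2 ⟨p0, ∅, ∅⟩,
        e + 2 ≤ ps.final.played (2*v+1) →
        ps.final.played k ≤ 5*(j-1) + 10) := by
  set o := 5*(j-1) with ho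
  set D := 2*v+1 with hD
  constructor
  · -- existence
    have main : ∃ pre mid post,
        clauseGadget v o e k1 k2 k3 =
          pre ++ assocRun o k ++ mid ++ [(e+1, D), (e+2, D), (e, D)] ++ post := by
      by_cases hc1 : k = k1
      · refine ⟨[], assocRun o k2 ++ assocRun o k3 ++
          ((List.range (2*v)).flatMap fun idx =>
            if idx + 1 = k1 ∨ idx + 1 = k2 ∨ idx + 1 = k3 then []
            else nonAssocRun o (idx + 1)),
          [(o+3, k1), (o+3, k2), (o+3, k3)] ++ tailRun o k1 ++ tailRun o k2 ++ tailRun o k3,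
          ?_⟩
        rw [hc1]
        simp [clauseGadget, List.append_assoc, hD]
      · by_cases hc2 : k = k2
        · refine ⟨assocRun o k1, assocRun o k3 ++
            ((List.range (2*v)).flatMap fun idx =>
              if idx + 1 = k1 ∨ idx + 1 = k2 ∨ idx + 1 = k3 then []
              else nonAssocRun o (idx + 1)),
            [(o+3, k1), (o+3, k2), (o+3, k3)] ++ tailRun o k1 ++ tailRun o k2 ++ tailRun o k3,
            ?_⟩
          rw [hc2]
          simp [clauseGadget, List.append_assoc, hD]
        · by_cases hc3 : k = k3
          · refine ⟨assocRun o k1 ++ assocRun o k2,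
              ((List.range (2*v)).flatMap fun idx =>
                if idx + 1 = k1 ∨ idx + 1 = k2 ∨ idx + 1 = k3 then []
                else nonAssocRun o (idx + 1)),
              [(o+3, k1), (o+3, k2), (o+3, k3)] ++ tailRun o k1 ++ tailRun o k2 ++ tailRun o k3,
              ?_⟩
            rw [hc3]
            simp [clauseGadget, List.append_assoc, hD]
          · -- non-associated color
            set f : ℕ → List Card := fun idx =>
              if idx + 1 = k1 ∨ idx + 1 = k2 ∨ idx + 1 = k3 then []
              else nonAssocRun o (idx + 1) with hf
            have hflat : (List.range (2*v)).flatMap f =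
                (List.range (k-1)).flatMap f ++
                (nonAssocRun o k ++
                  ((List.range (2*v-k)).map (fun x => (k-1) + 1 + x)).flatMap f) := by
              conv_lhs => rw [show 2*v = (k-1) + 1 + (2*v-k) by omega, List.range_add,
                List.range_succ, List.flatMap_append, List.flatMap_append]
              rw [List.append_assoc]
              congr 1
              congr 1
              show f (k-1) ++ [] = nonAssocRun o k
              rw [List.append_nil, hf]
              simp only [show k - 1 + 1 = k by omega]
              rw [if_neg (by tauto)]
            refine ⟨assocRun o k1 ++ assocRun o k2 ++ assocRun o k3 ++
              (List.range (k-1)).flatMap f ++ [(o+5, k)],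
              [(o+2, k), (o+3, k), (o+4, k)] ++
                ((List.range (2*v-k)).map (fun x => (k-1) + 1 + x)).flatMap f,
              [(o+3, k1), (o+3, k2), (o+3, k3)] ++ tailRun o k1 ++ tailRun o k2 ++ tailRun o k3,
              ?_⟩
            have hna : nonAssocRun o k =
                [(o+5, k)] ++ assocRun o k ++ [(o+2, k), (o+3, k), (o+4, k)] := by
              simp [nonAssocRun, assocRun]
            rw [clauseGadget, hflat, hna]
            simp [List.append_assoc, hD]
    obtain ⟨pre, mid, post, hsplit⟩ := main
    obtain ⟨ps, h1, h2⟩ := exists_play (clauseGadget v o e k1 k2 k3) pre mid post 2 o e k D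
      hsplit p0 hp0k hp0d (by omega) he le_rfl
    exact ⟨ps, by omega, by omega⟩
  · -- upper bound
    intro ps _
    apply playSeq_bound (o := o) ?_ ps (by show p0 k ≤ o + 10; omega)
    apply nth_bound hk.1
    intro cd hcd hcol
    rcases gadget_cards v o e k1 k2 k3 cd hcd with h | h
    · omega
    · exact h
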